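/- Let p and m + 1 be primes with m ≥ 1, p ≠ m + 1 and p ≢ 1 (mod m + 1), and set ℓ = (p^(m+1) − 1)/(p − 1) and q = (p^m − 1)/(p − 1). Let D be a finset of ZMod ℓ with cardinality q whose image under the map x ↦ p·x equals D. Then 0 ∉ D, and D is a disjoint union of orbits under multiplication by p, each of cardinality exactly m + 1. -/

import Mathlib

/-- Lemma 4.2: under the hypotheses on the primes `p` and `m + 1`, a Frobenius difference
set `D ⊆ ZMod ℓ` of cardinality `q` does not contain `0`, and is a (disjoint) union of
orbits under multiplication by `p`, each of cardinality exactly `m + 1`. -/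
theorem stmt_17 (p m ℓ q : ℕ) (hp : p.Prime) (hm1 : (m + 1).Prime) (hm : 1 ≤ m)
    (hne : p ≠ m + 1) (hmod : ¬ p ≡ 1 [MOD m + 1])
    (hℓ : ℓ = (p ^ (m + 1) - 1) / (p - 1)) (hq : q = (p ^ m - 1) / (p - 1))
    (D : Finset (ZMod ℓ)) (hcard : D.card = q)
    (hfrob : D.image (fun x => (p : ZMod ℓ) * x) = D) :
    0 ∉ D ∧
      ∀ d ∈ D, {x : ZMod ℓ | ∃ k : ℕ, x = (p : ZMod ℓ) ^ k * d} ⊆ ↑D ∧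
        Nat.card {x : ZMod ℓ // ∃ k : ℕ, x = (p : ZMod ℓ) ^ k * d} = m + 1 := by
  have hp2 : 2 ≤ p := hp.two_le
  have hp1 : 1 ≤ p := by omega
  -- geometric sum
  have hgeom : ∀ n, (p - 1) * ∑ i ∈ Finset.range n, p ^ i = p ^ n - 1 := by
    intro n
    induction n with
    | zero => simp
    | succ n ih =>
      rw [Finset.sum_range_succ, mul_add, ih, pow_succ]
      have h1 : 1 ≤ p ^ n := Nat.one_le_pow _ _ (by omega)
      have h2 : (p - 1) * p ^ n = p ^ n * p - p ^ n := by
        rw [Nat.sub_mul, one_mul, mul_comm]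
      have h3 : p ^ n ≤ p ^ n * p := Nat.le_mul_of_pos_right _ (by omega)
      omega
  have hℓsum : ℓ = ∑ i ∈ Finset.range (m + 1), p ^ i := by
    rw [hℓ, ← hgeom (m + 1), Nat.mul_div_cancel_left _ (by omega : 0 < p - 1)]
  have hqsum : q = ∑ i ∈ Finset.range m, p ^ i := by
    rw [hq, ← hgeom m, Nat.mul_div_cancel_left _ (by omega : 0 < p - 1)]
  have hℓge : p + 1 ≤ ℓ := by
    have h2 : ∑ i ∈ Finset.range 2, p ^ i ≤ ∑ i ∈ Finset.range (m + 1), p ^ i :=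
      Finset.sum_le_sum_of_subset (Finset.range_subset_range.mpr (by omega))
    have h3 : ∑ i ∈ Finset.range 2, p ^ i = 1 + p := by
      simp [Finset.sum_range_succ]
    omega
  have hℓm : m + 1 ≤ ℓ := by
    have h2 : ∑ i ∈ Finset.range (m + 1), (1 : ℕ) ≤ ∑ i ∈ Finset.range (m + 1), p ^ i :=
      Finset.sum_le_sum (fun i _ => Nat.one_le_pow _ _ (by omega))
    have h3 : ∑ i ∈ Finset.range (m + 1), (1 : ℕ) = m + 1 := by simp
    omega
  haveI : NeZero ℓ := ⟨by omega⟩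
  have hℓdvd : ℓ ∣ p ^ (m + 1) - 1 := ⟨p - 1, by rw [← hgeom (m + 1), hℓsum, mul_comm]⟩
  have hupow : (p : ZMod ℓ) ^ (m + 1) = 1 := by
    have h1 : 1 ≤ p ^ (m + 1) := Nat.one_le_pow _ _ (by omega)
    have : ((p ^ (m + 1) - 1 : ℕ) : ZMod ℓ) = 0 :=
      (ZMod.natCast_eq_zero_iff _ _).mpr hℓdvd
    rw [Nat.cast_sub h1, Nat.cast_pow, Nat.cast_one, sub_eq_zero] at this
    exact this
  have hpu : IsUnit ((p : ZMod ℓ)) := by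
    refine IsUnit.of_mul_eq_one ((p : ZMod ℓ) ^ m) ?_
    rw [← pow_succ']
    exact hupow
  have hpowmod : ∀ a : ℕ, (p : ZMod ℓ) ^ a = (p : ZMod ℓ) ^ (a % (m + 1)) := by
    intro a
    conv_lhs => rw [← Nat.mod_add_div a (m + 1)]
    rw [pow_add, pow_mul, hupow, one_pow, mul_one]
  -- coprimality facts
  have hcop1 : Nat.Coprime (m + 1) (p - 1) := by
    refine (Nat.Prime.coprime_iff_not_dvd hm1).mpr (fun h => hmod ?_)
    exact ((Nat.modEq_iff_dvd' hp1).mpr h).symm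
  have hpmod : p ≡ 1 [MOD p - 1] := ((Nat.modEq_iff_dvd' hp1).mpr dvd_rfl).symm
  have hsummod : ∀ n, (∑ i ∈ Finset.range n, p ^ i) ≡ n [MOD p - 1] := by
    intro n
    induction n with
    | zero => rfl
    | succ n ih =>
      rw [Finset.sum_range_succ]
      have : p ^ n ≡ 1 [MOD p - 1] := by
        have := hpmod.pow n
        rwa [one_pow] at this
      exact ih.add this
  have hcopℓ : Nat.Coprime (p - 1) ℓ := by
    have h := (hsummod (m + 1)).symm
    rw [← hℓsum] at h
    obtain ⟨c, hc⟩ := (Nat.modEq_iff_dvd' hℓm).mp h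
    have hle2 : m + 1 ≤ ℓ := hℓm
    have hℓeq : ℓ = (m + 1) + (p - 1) * c := by omega
    rw [hℓeq]
    exact (Nat.coprime_add_mul_left_right _ _ _).mpr hcop1.symm
  have hp1u : IsUnit ((p : ZMod ℓ) - 1) := by
    have h := (ZMod.isUnit_iff_coprime (p - 1) ℓ).mpr hcopℓ
    rwa [Nat.cast_sub hp1, Nat.cast_one] at h
  have hzero : ∀ d : ZMod ℓ, ((p : ZMod ℓ) - 1) * d = 0 → d = 0 := by
    intro d hd
    exact (hp1u.mul_right_eq_zero).mp hd
  -- key: no nontrivial fixed points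
  have hfix : ∀ (d : ZMod ℓ) (k : ℕ), 0 < k → k < m + 1 → (p : ZMod ℓ) ^ k * d = d → d = 0 := by
    intro d k hk0 hk1 hkd
    have hnd : ¬ (m + 1) ∣ k := fun hdvd => absurd (Nat.le_of_dvd hk0 hdvd) (by omega)
    have hck : Nat.Coprime k (m + 1) := ((Nat.Prime.coprime_iff_not_dvd hm1).mpr hnd).symm
    obtain ⟨j, -, hj⟩ := Nat.exists_mul_mod_eq_one_of_coprime hck (by omega)
    have hiter : ∀ j : ℕ, (p : ZMod ℓ) ^ (k * j) * d = d := by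
      intro j
      induction j with
      | zero => simp
      | succ j ih =>
        rw [Nat.mul_succ, pow_add, mul_assoc, hkd, ih]
    have h1 : (p : ZMod ℓ) ^ (k * j) = (p : ZMod ℓ) := by
      rw [hpowmod (k * j), hj, pow_one]
    have h2 : (p : ZMod ℓ) * d = d := by rw [← h1]; exact hiter j
    apply hzero
    rw [sub_mul, one_mul, h2, sub_self]
  -- orbit cardinality
  have hOcard : ∀ d : ZMod ℓ, d ≠ 0 →
      ((Finset.range (m + 1)).image (fun k => (p : ZMod ℓ) ^ k * d)).card = m + 1 := by
    intro d hd
    rw [Finset.card_image_of_injOn, Finset.card_range]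
    have key : ∀ i j : ℕ, i ≤ j → j < m + 1 →
        (p : ZMod ℓ) ^ i * d = (p : ZMod ℓ) ^ j * d → i = j := by
      intro i j hij hj hEq
      by_contra hne'
      have hlt : i < j := lt_of_le_of_ne hij hne'
      have hdec : (p : ZMod ℓ) ^ j = (p : ZMod ℓ) ^ i * (p : ZMod ℓ) ^ (j - i) := by
        rw [← pow_add]
        congr 1
        omega
      rw [hdec, mul_assoc] at hEq
      have hcan := ((hpu.pow i).mul_left_cancel (a := (p : ZMod ℓ) ^ i) (hEq.symm))
      have := hfix d (j - i) (by omega) (by omega) hcan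
      exact hd this
    intro i hi j hj hEq
    simp only [Finset.coe_range, Set.mem_Iio] at hi hj
    rcases le_total i j with h | h
    · exact key i j h hj hEq
    · exact (key j i h hi hEq.symm).symm
  -- membership under iteration
  have hmemD : ∀ x ∈ D, (p : ZMod ℓ) * x ∈ D := by
    intro x hx
    rw [← hfrob]
    exact Finset.mem_image_of_mem _ hx
  have hmemk : ∀ x ∈ D, ∀ k : ℕ, (p : ZMod ℓ) ^ k * x ∈ D := by
    intro x hx k
    induction k with
    | zero => simpa using hx
    | succ k ih =>
      rw [pow_succ', mul_assoc]
      exact hmemD _ ih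
  -- divisibility of invariant 0-free sets
  have hdivS : ∀ S : Finset (ZMod ℓ), (0 : ZMod ℓ) ∉ S →
      (∀ x ∈ S, (p : ZMod ℓ) * x ∈ S) → (m + 1) ∣ S.card := by
    intro S
    induction S using Finset.strongInductionOn with
    | _ S ih =>
      intro h0 hinv
      rcases S.eq_empty_or_nonempty with rfl | ⟨d, hd⟩
      · simp
      have hd0 : d ≠ 0 := fun h => h0 (h ▸ hd)
      set O : Finset (ZMod ℓ) :=
        (Finset.range (m + 1)).image (fun k => (p : ZMod ℓ) ^ k * d) with hO
      have hmemkS : ∀ k : ℕ, (p : ZMod ℓ) ^ k * d ∈ S := by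
        intro k
        induction k with
        | zero => simpa using hd
        | succ k ih' =>
          rw [pow_succ', mul_assoc]
          exact hinv _ ih'
      have hOsub : O ⊆ S := by
        intro x hx
        simp only [hO, Finset.mem_image] at hx
        obtain ⟨k, _, rfl⟩ := hx
        exact hmemkS k
      have hOmem : ∀ x, x ∈ O ↔ ∃ k : ℕ, x = (p : ZMod ℓ) ^ k * d := by
        intro x
        simp only [hO, Finset.mem_image, Finset.mem_range]
        constructor
        · rintro ⟨k, _, rfl⟩; exact ⟨k, rfl⟩
        · rintro ⟨k, rfl⟩
          exact ⟨k % (m + 1), Nat.mod_lt _ (by omega), by rw [← hpowmod]⟩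
      have hdO : d ∈ O := (hOmem d).mpr ⟨0, by simp⟩
      have hssub : S \ O ⊂ S := Finset.sdiff_ssubset hOsub ⟨d, hdO⟩
      have hinv' : ∀ x ∈ S \ O, (p : ZMod ℓ) * x ∈ S \ O := by
        intro x hx
        rw [Finset.mem_sdiff] at hx ⊢
        refine ⟨hinv _ hx.1, fun hpxO => hx.2 ?_⟩
        obtain ⟨k, hk⟩ := (hOmem _).mp hpxO
        refine (hOmem x).mpr ⟨m + k, ?_⟩
        have : x = (p : ZMod ℓ) ^ m * ((p : ZMod ℓ) * x) := by
          rw [← mul_assoc, ← pow_succ, hupow, one_mul]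
        rw [this, hk, ← mul_assoc, ← pow_add]
      have h0' : (0 : ZMod ℓ) ∉ S \ O := fun h => h0 (Finset.mem_sdiff.mp h).1
      have hcardeq := Finset.card_sdiff_add_card_eq_card hOsub
      have hdvd' := ih (S \ O) hssub h0' hinv'
      rw [← hcardeq, hOcard d hd0]
      exact dvd_add hdvd' dvd_rfl
  -- (m+1) divides q
  have hpm1 : (m + 1) ∣ p ^ m - 1 := by
    haveI : Fact (m + 1).Prime := ⟨hm1⟩
    have hpne : (p : ZMod (m + 1)) ≠ 0 := by
      rw [Ne, ZMod.natCast_eq_zero_iff]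
      intro hdvd
      exact hne ((Nat.prime_dvd_prime_iff_eq hm1 hp).mp hdvd).symm
    have hfermat := ZMod.pow_card_sub_one_eq_one hpne
    have h1 : 1 ≤ p ^ m := Nat.one_le_pow _ _ (by omega)
    rw [← ZMod.natCast_eq_zero_iff, Nat.cast_sub h1, Nat.cast_pow, Nat.cast_one,
      sub_eq_zero]
    simpa using hfermat
  have hdvdq : (m + 1) ∣ q := by
    have hmul : p ^ m - 1 = (p - 1) * q := by rw [hqsum, hgeom m]
    have : (m + 1) ∣ (p - 1) * q := hmul ▸ hpm1
    exact (Nat.Coprime.dvd_of_dvd_mul_left hcop1 this)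
  have hq1 : 1 ≤ q := by
    rw [hqsum]
    calc 1 = p ^ 0 := by simp
    _ ≤ ∑ i ∈ Finset.range m, p ^ i :=
      Finset.single_le_sum (f := fun i => p ^ i) (fun i _ => Nat.zero_le _)
        (Finset.mem_range.mpr (by omega))
  -- 0 ∉ D
  have h0D : (0 : ZMod ℓ) ∉ D := by
    intro h0
    have hinv' : ∀ x ∈ D.erase 0, (p : ZMod ℓ) * x ∈ D.erase 0 := by
      intro x hx
      rw [Finset.mem_erase] at hx ⊢
      refine ⟨fun hpx => hx.1 (hpu.mul_right_eq_zero.mp hpx), hmemD _ hx.2⟩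
    have hdvd1 := hdivS (D.erase 0) (fun h => (Finset.mem_erase.mp h).1 rfl) hinv'
    rw [Finset.card_erase_of_mem h0, hcard] at hdvd1
    have : (m + 1) ∣ 1 := by
      have := Nat.dvd_sub (hcard ▸ hdvdq : (m + 1) ∣ q) hdvd1
      rwa [Nat.sub_sub_self hq1] at this
    have := Nat.le_of_dvd one_pos this
    omega
  refine ⟨h0D, fun d hd => ?_⟩
  have hd0 : d ≠ 0 := fun h => h0D (h ▸ hd)
  set O : Finset (ZMod ℓ) :=
    (Finset.range (m + 1)).image (fun k => (p : ZMod ℓ) ^ k * d) with hO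
  have hset : {x : ZMod ℓ | ∃ k : ℕ, x = (p : ZMod ℓ) ^ k * d} = ↑O := by
    ext x
    simp only [Set.mem_setOf_eq, hO, Finset.coe_image, Finset.coe_range, Set.mem_image,
      Set.mem_Iio]
    constructor
    · rintro ⟨k, rfl⟩
      exact ⟨k % (m + 1), Nat.mod_lt _ (by omega), by rw [← hpowmod]⟩
    · rintro ⟨k, _, rfl⟩; exact ⟨k, rfl⟩
  constructor
  · rintro x ⟨k, rfl⟩
    exact hmemk d hd k
  · calc Nat.card {x : ZMod ℓ // ∃ k : ℕ, x = (p : ZMod ℓ) ^ k * d}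
        = Nat.card (↑O : Set (ZMod ℓ)) := Nat.card_congr (Equiv.setCongr hset)
    _ = (↑O : Set (ZMod ℓ)).ncard := Nat.card_coe_set_eq _
    _ = O.card := Set.ncard_coe_finset _
    _ = m + 1 := hOcard d hd0
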